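/- Any set of n+2 points in the closed unit ball of ℝⁿ contains two distinct points at distance at most √2. -/

import Mathlib

open FiniteDimensional Module

local notation "⟪" x ", " y "⟫" => @inner ℝ _ _ x y

lemma aux_neg_inner_card (n : ℕ) :
    ∀ {E : Type} [NormedAddCommGroup E] [InnerProductSpace ℝ E] [FiniteDimensional ℝ E]
      (s : Finset E), finrank ℝ E = n →
      (∀ x ∈ s, ∀ y ∈ s, x ≠ y → ⟪x, y⟫ < 0) → s.card ≤ n + 1 := by
  induction n with
  | zero =>
    intro E _ _ _ s hrank hneg
    by_contra h
    push_neg at h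
    obtain ⟨x, hx, y, hy, hxy⟩ := Finset.one_lt_card.mp h
    have hx0 : x = 0 := by
      have := finrank_zero_iff.mp hrank
      exact Subsingleton.elim x 0
    have := hneg x hx y hy hxy
    rw [hx0, inner_zero_left] at this
    exact lt_irrefl 0 this
  | succ n ih =>
    intro E _ _ _ s hrank hneg
    classical
    by_contra h
    push_neg at h
    have h2 : 1 < s.card := by omega
    obtain ⟨u, hu, x₀, hx₀, hux₀⟩ := Finset.one_lt_card.mp h2
    have hu0 : u ≠ 0 := by
      intro h0
      have := hneg u hu x₀ hx₀ hux₀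
      rw [h0, inner_zero_left] at this
      exact lt_irrefl 0 this
    have hnu : (0:ℝ) < ‖u‖ ^ 2 := pow_pos (norm_pos_iff.mpr hu0) 2
    set K : Submodule ℝ E := (ℝ ∙ u)ᗮ with hK
    haveI : Fact (finrank ℝ E = n + 1) := ⟨hrank⟩
    have hKrank : finrank ℝ K = n := Submodule.finrank_orthogonal_span_singleton hu0
    -- the projection map
    have hmem : ∀ x : E, x - (⟪u, x⟫ / ‖u‖ ^ 2) • u ∈ K := by
      intro x
      rw [hK, Submodule.mem_orthogonal_singleton_iff_inner_right]
      rw [inner_sub_right, inner_smul_right, real_inner_self_eq_norm_sq]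
      field_simp
      ring
    set g : E → K := fun x => ⟨x - (⟪u, x⟫ / ‖u‖ ^ 2) • u, hmem x⟩ with hg
    set t : Finset E := s.erase u with ht
    have hinner : ∀ x ∈ t, ∀ y ∈ t, x ≠ y → ⟪g x, g y⟫ < 0 := by
      intro x hx y hy hxy
      have hxs : x ∈ s := Finset.mem_of_mem_erase hx
      have hys : y ∈ s := Finset.mem_of_mem_erase hy
      have hxu : x ≠ u := Finset.ne_of_mem_erase hx
      have hyu : y ≠ u := Finset.ne_of_mem_erase hy
      have h1 : ⟪x, y⟫ < 0 := hneg x hxs y hys hxy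
      have h2 : ⟪u, x⟫ < 0 := hneg u hu x hxs (Ne.symm hxu)
      have h3 : ⟪u, y⟫ < 0 := hneg u hu y hys (Ne.symm hyu)
      have hval : ⟪g x, g y⟫ = ⟪x, y⟫ - ⟪u, x⟫ * ⟪u, y⟫ / ‖u‖ ^ 2 := by
        show ⟪x - (⟪u, x⟫ / ‖u‖ ^ 2) • u, y - (⟪u, y⟫ / ‖u‖ ^ 2) • u⟫ = _
        simp only [inner_sub_left, inner_sub_right, real_inner_smul_left,
          real_inner_smul_right, real_inner_self_eq_norm_sq, real_inner_comm x u]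
        field_simp
        ring
      rw [hval]
      have : 0 < ⟪u, x⟫ * ⟪u, y⟫ / ‖u‖ ^ 2 := div_pos (mul_pos_of_neg_of_neg h2 h3) hnu
      linarith
    have hinj : Set.InjOn g t := by
      intro x hx y hy hxy
      by_contra hne
      have := hinner x hx y hy hne
      rw [hxy, real_inner_self_eq_norm_sq] at this
      nlinarith [norm_nonneg (g y)]
    have hcard' : (t.image g).card = t.card := Finset.card_image_of_injOn hinj
    have := ih (t.image g) hKrank (by
      intro a ha b hb hab
      obtain ⟨x, hx, rfl⟩ := Finset.mem_image.mp ha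
      obtain ⟨y, hy, rfl⟩ := Finset.mem_image.mp hb
      exact hinner x hx y hy (fun h' => hab (by rw [h'])))
    have htcard : t.card = s.card - 1 := Finset.card_erase_of_mem hu
    omega

theorem exists_close_pair_of_card_n_add_two (n : ℕ)
    (P : Finset (EuclideanSpace ℝ (Fin n)))
    (hcard : P.card = n + 2)
    (hball : ∀ p ∈ P, ‖p‖ ≤ 1) :
    ∃ p ∈ P, ∃ q ∈ P, p ≠ q ∧ dist p q ≤ Real.sqrt 2 := by
  classical
  by_contra h
  push_neg at h
  have hneg : ∀ x ∈ P, ∀ y ∈ P, x ≠ y → ⟪x, y⟫ < 0 := by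
    intro x hx y hy hxy
    have hd := h x hx y hy hxy
    have hd2 : 2 < dist x y ^ 2 := by
      have h2 : Real.sqrt 2 < dist x y := hd
      nlinarith [Real.sq_sqrt (by norm_num : (0:ℝ) ≤ 2), Real.sqrt_nonneg 2, dist_nonneg (x := x) (y := y)]
    rw [dist_eq_norm, norm_sub_sq_real] at hd2
    have hx1 := hball x hx
    have hy1 := hball y hy
    nlinarith [norm_nonneg x, norm_nonneg y]
  have := aux_neg_inner_card n P (finrank_euclideanSpace_fin) hneg
  omega
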